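/- There is no infinite chain of difference-inverses among extraTribs: there is no function F : ℕ → (ℕ → ℤ) such that for every k, the sequence F_k satisfies the Tribonacci rule, F_k is eventually positive (there exists N with F_k(n) > 0 for all n ≥ N), and F_{k+1}(n+1) − F_{k+1}(n) = F_k(n) for all n. -/

import Mathlib

/-- There is no infinite chain of difference-inverses among extraTribs: no
    `F : ℕ → (ℕ → ℤ)` such that every `F k` satisfies the Tribonacci rule, is
    eventually positive, and `F (k+1)` has difference sequence `F k`. -/
theorem no_infinite_inverse_chain :
    ¬∃ F : ℕ → ℕ → ℤ,
      ∀ k : ℕ,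
        (∀ n : ℕ, F k (n + 3) = F k (n + 2) + F k (n + 1) + F k n) ∧
        (∃ N : ℕ, ∀ n ≥ N, 0 < F k n) ∧
        (∀ n : ℕ, F (k + 1) (n + 1) - F (k + 1) n = F k n) := by
  rintro ⟨F, hF⟩
  -- Step 1: 2 * F (k+1) n = F k (n+2) - F k n
  have key1 : ∀ k n : ℕ, 2 * F (k + 1) n = F k (n + 2) - F k n := by
    intro k n
    have t := (hF (k + 1)).1 n
    have d0 := (hF k).2.2 n
    have d2 := (hF k).2.2 (n + 2)
    have e1 : n + 2 + 1 = n + 3 := by omega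
    rw [e1] at d2
    linarith
  -- Step 2: 2 * F (k+3) n = F k (n+2)   (since (S²-1)³ ≡ 4 S² mod S³-S²-S-1)
  have key3 : ∀ k n : ℕ, 2 * F (k + 3) n = F k (n + 2) := by
    intro k n
    have e1 := key1 (k + 2) n
    have e2 := key1 (k + 1) n
    have e3 := key1 (k + 1) (n + 2)
    have e4 := key1 k n
    have e5 := key1 k (n + 2)
    have e6 := key1 k (n + 4)
    have t0 := (hF k).1 n
    have t1 := (hF k).1 (n + 1)
    have t2 := (hF k).1 (n + 2)
    have t3 := (hF k).1 (n + 3)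
    have r1 : k + 2 + 1 = k + 3 := by omega
    have r2 : k + 1 + 1 = k + 2 := by omega
    have r3 : n + 2 + 2 = n + 4 := by omega
    have r4 : n + 4 + 2 = n + 6 := by omega
    have r5 : n + 1 + 3 = n + 4 := by omega
    have r6 : n + 1 + 2 = n + 3 := by omega
    have r7 : n + 1 + 1 = n + 2 := by omega
    have r8 : n + 2 + 3 = n + 5 := by omega
    have r9 : n + 2 + 1 = n + 3 := by omega
    have r10 : n + 3 + 3 = n + 6 := by omega
    have r11 : n + 3 + 2 = n + 5 := by omega
    have r12 : n + 3 + 1 = n + 4 := by omega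
    rw [r1] at e1
    rw [r2] at e2 e3
    rw [r3] at e3 e5
    rw [r4] at e6
    rw [r5, r6, r7] at t1
    rw [r3, r8, r9] at t2
    rw [r10, r11, r12] at t3
    linarith
  -- Step 3: every term of every sequence is divisible by every power of 2
  have pow2 : ∀ j k n : ℕ, (2 ^ j : ℤ) ∣ F k n := by
    intro j
    induction j with
    | zero => simp
    | succ j ih =>
      have h2 : ∀ k n : ℕ, (2 ^ (j + 1) : ℤ) ∣ F k (n + 2) := by
        intro k n
        have hk := key3 k n
        obtain ⟨a, ha⟩ := ih (k + 3) n
        refine ⟨a, ?_⟩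
        rw [← hk, ha]
        ring
      intro k n
      have h1 : (2 ^ (j + 1) : ℤ) ∣ F k 1 := by
        have t := (hF k).1 1
        norm_num at t
        have a := h2 k 2
        have b := h2 k 1
        have c := h2 k 0
        norm_num at a b c
        have : F k 1 = F k 4 - F k 3 - F k 2 := by linarith
        rw [this]
        exact dvd_sub (dvd_sub a b) c
      have h0 : (2 ^ (j + 1) : ℤ) ∣ F k 0 := by
        have t := (hF k).1 0
        norm_num at t
        have b := h2 k 1
        have c := h2 k 0
        norm_num at b c
        have : F k 0 = F k 3 - F k 2 - F k 1 := by linarith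
        rw [this]
        exact dvd_sub (dvd_sub b c) h1
      match n with
      | 0 => exact h0
      | 1 => exact h1
      | (m + 2) => exact h2 k m
  -- Step 4: so every term is 0, contradicting eventual positivity
  obtain ⟨N, hN⟩ := (hF 0).2.1
  have hpos : 0 < F 0 N := hN N le_rfl
  have hdvd := pow2 (F 0 N).natAbs 0 N
  have hle : (2 : ℤ) ^ (F 0 N).natAbs ≤ F 0 N := Int.le_of_dvd hpos hdvd
  have hlt : (F 0 N) < 2 ^ (F 0 N).natAbs := by
    calc F 0 N = ((F 0 N).natAbs : ℤ) := by
          rw [Int.natAbs_of_nonneg hpos.le]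
      _ < 2 ^ (F 0 N).natAbs := by
          exact_mod_cast Nat.lt_two_pow_self (n := (F 0 N).natAbs)
  linarith
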